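/- Let n ≥ 3 and let the dihedral group D_{2n} act diagonally on C[u1,v1,u2,v2], via ρ: u_i ↦ ξu_i, v_i ↦ ξ̄v_i (i = 1,2) and τ: u_i ↔ v_i (i = 1,2), with ξ = e^{2πi/n}. Then C[u1,v1,u2,v2] is a free module over the subalgebra C[u1,v1]^{D_{2n}} ⊗ C[u2,v2]^{D_{2n}} = C[u1v1, u1^n+v1^n, u2v2, u2^n+v2^n], with free basis {u1^a u2^c, u1^a v2^d, v1^b u2^c, v1^b v2^d : 0 ≤ a,c ≤ n, 1 ≤ b,d ≤ n−1}. -/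

import Mathlib

open MvPolynomial Pointwise

set_option synthInstance.maxHeartbeats 1000000
set_option maxHeartbeats 1000000




lemma pair_point {n : ℕ} (hn : 3 ≤ n) (ζ : ℂ) (hζ : IsPrimitiveRoot ζ n) (α β z : ℂ)
    (hα : α ≠ 0) (hβ : β ≠ 0)
    (hform : ∃ j : Fin n, z = ζ ^ (j : ℕ) * α ∨ z = ζ ^ (j : ℕ) * β) :
    z ≠ 0 ∧ z * (α * β / z) = α * β ∧ z ^ n + (α * β / z) ^ n = α ^ n + β ^ n := by
  obtain ⟨j, hj⟩ := hform
  have hζ0 : ζ ≠ 0 := hζ.ne_zero (by omega)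
  have hzn : z ≠ 0 := by
    rcases hj with rfl | rfl <;> exact mul_ne_zero (pow_ne_zero _ hζ0) ‹_›
  have hone : (ζ ^ (j : ℕ)) ^ n = 1 := by
    rw [← pow_mul, mul_comm, pow_mul, hζ.pow_eq_one, one_pow]
  have hzpow : z ^ n = α ^ n ∨ z ^ n = β ^ n := by
    rcases hj with rfl | rfl
    · left; rw [mul_pow, hone, one_mul]
    · right; rw [mul_pow, hone, one_mul]
  refine ⟨hzn, by field_simp, ?_⟩
  rw [div_pow, mul_pow]
  rcases hzpow with h | h <;> rw [h]
  · rw [mul_comm (α ^ n) (β ^ n), mul_div_assoc, div_self (pow_ne_zero n hα), mul_one]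
  · rw [mul_div_assoc, div_self (pow_ne_zero n hβ), mul_one, add_comm]

lemma vd_aux {n : ℕ} (hn : 3 ≤ n) (ζ α β : ℂ) (hζ : IsPrimitiveRoot ζ n)
    (hα : α ≠ 0) (hβ : β ≠ 0) (hαβ : α ^ n ≠ β ^ n)
    (d : Fin (n + 1) ⊕ Fin (n - 1) → ℂ)
    (H : ∀ j : Fin n, ∀ z : ℂ, (z = ζ ^ (j : ℕ) * α ∨ z = ζ ^ (j : ℕ) * β) →
      ∑ q, d q * Sum.elim (fun a : Fin (n + 1) => z ^ (a : ℕ))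
        (fun b : Fin (n - 1) => (α * β / z) ^ ((b : ℕ) + 1)) q = 0) :
    ∀ q, d q = 0 := by
  have hζ0 : ζ ≠ 0 := hζ.ne_zero (by omega)
  set ε : Fin (n + 1) ⊕ Fin (n - 1) → ℕ :=
    Sum.elim (fun a => n - 1 + (a : ℕ)) (fun b => n - 2 - (b : ℕ)) with hε
  set w : Fin (n + 1) ⊕ Fin (n - 1) → ℂ :=
    Sum.elim (fun _ => 1) (fun b => (α * β) ^ ((b : ℕ) + 1)) with hw
  have hεinj : Function.Injective ε := by
    rintro (a | b) (a' | b') h <;> simp only [hε, Sum.elim_inl, Sum.elim_inr] at h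
    · have := a.2; have := a'.2; congr 1; omega
    · have := b'.2; omega
    · have := b.2; omega
    · have := b.2; have := b'.2; congr 1; omega
  have hw0 : ∀ q, w q ≠ 0 := by
    rintro (a | b) <;> simp [hw, hα, hβ]
  set Qp : Polynomial ℂ := ∑ q, Polynomial.C (d q * w q) * Polynomial.X ^ (ε q) with hQp
  set ρ : Fin n ⊕ Fin n → ℂ := Sum.elim (fun j => ζ ^ (j : ℕ) * α) (fun j => ζ ^ (j : ℕ) * β)
    with hρ
  have hpown : ∀ j : Fin n, (ζ ^ (j : ℕ)) ^ n = 1 := by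
    intro j; rw [← pow_mul, mul_comm, pow_mul, hζ.pow_eq_one, one_pow]
  have hρinj : Function.Injective ρ := by
    rintro (j | j) (j' | j') h <;> simp only [hρ, Sum.elim_inl, Sum.elim_inr] at h
    · have := hζ.pow_inj j.2 j'.2 (mul_right_cancel₀ hα h); exact congrArg _ (Fin.ext this)
    · exfalso; apply hαβ
      have : (ζ ^ (j : ℕ) * α) ^ n = (ζ ^ (j' : ℕ) * β) ^ n := by rw [h]
      rwa [mul_pow, mul_pow, hpown, hpown, one_mul, one_mul] at this
    · exfalso; apply hαβ
      have : (ζ ^ (j' : ℕ) * α) ^ n = (ζ ^ (j : ℕ) * β) ^ n := by rw [h]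
      rwa [mul_pow, mul_pow, hpown, hpown, one_mul, one_mul] at this
    · have := hζ.pow_inj j.2 j'.2 (mul_right_cancel₀ hβ h); exact congrArg _ (Fin.ext this)
  have hρ0 : ∀ i, ρ i ≠ 0 := by
    rintro (j | j) <;> simp [hρ, hα, hβ, hζ0]
  have heval : ∀ i, Qp.eval (ρ i) = 0 := by
    intro i
    have hform : ∃ j : Fin n, ρ i = ζ ^ (j : ℕ) * α ∨ ρ i = ζ ^ (j : ℕ) * β := by
      rcases i with j | j
      exacts [⟨j, Or.inl rfl⟩, ⟨j, Or.inr rfl⟩]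
    obtain ⟨j, hj⟩ := hform
    set z := ρ i with hz
    have hz0 : z ≠ 0 := hρ0 i
    have key : Qp.eval z = z ^ (n - 1) *
        ∑ q, d q * Sum.elim (fun a : Fin (n + 1) => z ^ (a : ℕ))
          (fun b : Fin (n - 1) => (α * β / z) ^ ((b : ℕ) + 1)) q := by
      rw [hQp, Polynomial.eval_finset_sum, Finset.mul_sum]
      refine Finset.sum_congr rfl ?_
      rintro (a | b) -
      · simp only [hε, hw, Sum.elim_inl, Polynomial.eval_mul, Polynomial.eval_C,
          Polynomial.eval_pow, Polynomial.eval_X, mul_one]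
        rw [pow_add]; ring
      · simp only [hε, hw, Sum.elim_inr, Polynomial.eval_mul, Polynomial.eval_C,
          Polynomial.eval_pow, Polynomial.eval_X]
        have hb : (b : ℕ) ≤ n - 2 := by have := b.2; omega
        have hzz : z ^ (n - 1) = z ^ (n - 2 - (b : ℕ)) * z ^ ((b : ℕ) + 1) := by
          rw [← pow_add]; congr 1; omega
        rw [div_pow, hzz]
        field_simp
    rw [key, H j z hj, mul_zero]
  have hdeg : Qp.natDegree < Fintype.card (Fin n ⊕ Fin n) := by
    have : Qp.natDegree ≤ 2 * n - 1 := by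
      apply Polynomial.natDegree_sum_le_of_forall_le
      rintro (a | b) -
      · refine (Polynomial.natDegree_C_mul_X_pow_le _ _).trans ?_
        simp only [hε, Sum.elim_inl]; have := a.2; omega
      · refine (Polynomial.natDegree_C_mul_X_pow_le _ _).trans ?_
        simp only [hε, Sum.elim_inr]; omega
    simp only [Fintype.card_sum, Fintype.card_fin]
    omega
  have hQ0 : Qp = 0 := Polynomial.eq_zero_of_natDegree_lt_card_of_eval_eq_zero Qp hρinj heval hdeg
  intro q
  have hcoeff : Qp.coeff (ε q) = d q * w q := by
    rw [hQp, Polynomial.finset_sum_coeff]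
    rw [Finset.sum_eq_single_of_mem q (Finset.mem_univ q)]
    · simp [Polynomial.coeff_C_mul, Polynomial.coeff_X_pow, mul_assoc]
    · intro q' _ hq'
      simp only [Polynomial.coeff_C_mul, Polynomial.coeff_X_pow]
      rw [if_neg fun h => hq' (hεinj h.symm), mul_zero]
  rw [hQ0, Polynomial.coeff_zero] at hcoeff
  exact (mul_eq_zero.mp hcoeff.symm).resolve_right (hw0 q)

lemma inv_eval {n : ℕ} (x y : Fin 4 → ℂ)
    (h1 : y 0 * y 1 = x 0 * x 1) (h2 : y 0 ^ n + y 1 ^ n = x 0 ^ n + x 1 ^ n)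
    (h3 : y 2 * y 3 = x 2 * x 3) (h4 : y 2 ^ n + y 3 ^ n = x 2 ^ n + x 3 ^ n)
    (a : MvPolynomial (Fin 4) ℂ)
    (ha : a ∈ Algebra.adjoin ℂ
      ({X 0 * X 1, X 0 ^ n + X 1 ^ n, X 2 * X 3, X 2 ^ n + X 3 ^ n} :
        Set (MvPolynomial (Fin 4) ℂ))) :
    eval y a = eval x a := by
  induction ha using Algebra.adjoin_induction with
  | mem b hb =>
    simp only [Set.mem_insert_iff, Set.mem_singleton_iff] at hb
    rcases hb with rfl | rfl | rfl | rfl <;>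
      simp [h1, h2, h3, h4]
  | algebraMap r => simp
  | add b c hb hc ihb ihc => simp [ihb, ihc]
  | mul b c hb hc ihb ihc => simp [ihb, ihc]

lemma pair_mem_span {n : ℕ} (hn : 3 ≤ n) {M : Type*} [CommRing M] [Algebra ℂ M]
    (A : Subalgebra ℂ M) (u v : M)
    (hP : u * v ∈ A) (hQ : u ^ n + v ^ n ∈ A) (N i j : ℕ) (hij : i + j ≤ N) :
    u ^ i * v ^ j ∈ Submodule.span A
      (Set.range (Sum.elim (fun a : Fin (n + 1) => u ^ (a : ℕ))
        (fun b : Fin (n - 1) => v ^ ((b : ℕ) + 1)))) := by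
  induction N generalizing i j with
  | zero =>
    have hi : i = 0 := by omega
    have hj : j = 0 := by omega
    subst hi; subst hj
    simp only [pow_zero, one_mul]
    refine Submodule.subset_span (Set.mem_range.mpr ⟨Sum.inl ⟨0, by omega⟩, by simp⟩)
  | succ N IH =>
    set S := Submodule.span A
      (Set.range (Sum.elim (fun a : Fin (n + 1) => u ^ (a : ℕ))
        (fun b : Fin (n - 1) => v ^ ((b : ℕ) + 1)))) with hS
    have hsmul : ∀ (a : M), a ∈ A → ∀ (x : M), x ∈ S → a * x ∈ S := by
      intro a ha x hx
      have := S.smul_mem (⟨a, ha⟩ : A) hx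
      rwa [Subalgebra.smul_def, smul_eq_mul] at this
    rcases Nat.eq_zero_or_pos i with hi | hi
    · subst hi
      rw [pow_zero, one_mul]
      rcases le_or_gt j (n - 1) with hj | hj
      · rcases Nat.eq_zero_or_pos j with hj0 | hj0
        · subst hj0
          rw [pow_zero]
          exact Submodule.subset_span (Set.mem_range.mpr ⟨Sum.inl ⟨0, by omega⟩, by simp⟩)
        · refine Submodule.subset_span (Set.mem_range.mpr ⟨Sum.inr ⟨j - 1, by omega⟩, ?_⟩)
          simp only [Sum.elim_inr]
          congr 1
          omega
      · have hjn : n ≤ j := by omega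
        have key : v ^ j = (u ^ n + v ^ n) * v ^ (j - n) - u ^ n * v ^ (j - n) := by
          have hv : v ^ j = v ^ n * v ^ (j - n) := by rw [← pow_add]; congr 1; omega
          rw [hv]; ring
        rw [key]
        apply sub_mem
        · exact hsmul _ hQ _ (by simpa using IH 0 (j - n) (by omega))
        · rcases Nat.eq_or_lt_of_le hjn with hjeq | hjlt
          · rw [← hjeq]
            simp only [Nat.sub_self, pow_zero, mul_one]
            exact Submodule.subset_span (Set.mem_range.mpr ⟨Sum.inl ⟨n, by omega⟩, by simp⟩)
          · have h2 : u ^ n * v ^ (j - n) = (u * v) * (u ^ (n - 1) * v ^ (j - n - 1)) := by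
              rw [mul_mul_mul_comm, ← pow_succ', ← pow_succ']
              congr 2 <;> omega
            rw [h2]
            exact hsmul _ hP _ (IH (n - 1) (j - n - 1) (by omega))
    · rcases Nat.eq_zero_or_pos j with hj | hj
      · subst hj
        rw [pow_zero, mul_one]
        rcases le_or_gt i n with hin | hin
        · exact Submodule.subset_span (Set.mem_range.mpr ⟨Sum.inl ⟨i, by omega⟩, by simp⟩)
        · have key : u ^ i = (u ^ n + v ^ n) * u ^ (i - n) -
              (u * v) * (u ^ (i - n - 1) * v ^ (n - 1)) := by
            have h1 : u ^ i = u ^ n * u ^ (i - n) := by rw [← pow_add]; congr 1; omega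
            have h2 : (u * v) * (u ^ (i - n - 1) * v ^ (n - 1)) = v ^ n * u ^ (i - n) := by
              rw [mul_mul_mul_comm, ← pow_succ', ← pow_succ', mul_comm]
              congr 2 <;> omega
            rw [h2, h1]; ring
          rw [key]
          apply sub_mem
          · exact hsmul _ hQ _ (by simpa using IH (i - n) 0 (by omega))
          · exact hsmul _ hP _ (IH (i - n - 1) (n - 1) (by omega))
      · have key : u ^ i * v ^ j = (u * v) * (u ^ (i - 1) * v ^ (j - 1)) := by
          rw [mul_mul_mul_comm, ← pow_succ', ← pow_succ']
          congr 2 <;> omega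
        rw [key]
        exact hsmul _ hP _ (IH (i - 1) (j - 1) (by omega))
theorem four_variable_free_over_invariants (n : ℕ) (hn : 3 ≤ n) :
    ∃ B : Module.Basis ((Fin (n + 1) ⊕ Fin (n - 1)) × (Fin (n + 1) ⊕ Fin (n - 1)))
        ↥(Algebra.adjoin ℂ
            ({X 0 * X 1, X 0 ^ n + X 1 ^ n, X 2 * X 3, X 2 ^ n + X 3 ^ n} :
              Set (MvPolynomial (Fin 4) ℂ)))
        (MvPolynomial (Fin 4) ℂ),
      ∀ p : (Fin (n + 1) ⊕ Fin (n - 1)) × (Fin (n + 1) ⊕ Fin (n - 1)),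
        B p =
          (Sum.elim
              (fun i : Fin (n + 1) => (X 0 : MvPolynomial (Fin 4) ℂ) ^ (i : ℕ))
              (fun j : Fin (n - 1) =>
                (X 1 : MvPolynomial (Fin 4) ℂ) ^ ((j : ℕ) + 1)) p.1) *
          (Sum.elim
              (fun i : Fin (n + 1) => (X 2 : MvPolynomial (Fin 4) ℂ) ^ (i : ℕ))
              (fun j : Fin (n - 1) =>
                (X 3 : MvPolynomial (Fin 4) ℂ) ^ ((j : ℕ) + 1)) p.2) := by
  classical
  set A' : Subalgebra ℂ (MvPolynomial (Fin 4) ℂ) := Algebra.adjoin ℂ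
      ({X 0 * X 1, X 0 ^ n + X 1 ^ n, X 2 * X 3, X 2 ^ n + X 3 ^ n} :
        Set (MvPolynomial (Fin 4) ℂ)) with hA'
  set e1 : Fin (n + 1) ⊕ Fin (n - 1) → MvPolynomial (Fin 4) ℂ :=
    Sum.elim (fun i : Fin (n + 1) => (X 0 : MvPolynomial (Fin 4) ℂ) ^ (i : ℕ))
      (fun j : Fin (n - 1) => (X 1 : MvPolynomial (Fin 4) ℂ) ^ ((j : ℕ) + 1)) with he1
  set e2 : Fin (n + 1) ⊕ Fin (n - 1) → MvPolynomial (Fin 4) ℂ :=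
    Sum.elim (fun i : Fin (n + 1) => (X 2 : MvPolynomial (Fin 4) ℂ) ^ (i : ℕ))
      (fun j : Fin (n - 1) => (X 3 : MvPolynomial (Fin 4) ℂ) ^ ((j : ℕ) + 1)) with he2
  set bas : (Fin (n + 1) ⊕ Fin (n - 1)) × (Fin (n + 1) ⊕ Fin (n - 1)) →
      MvPolynomial (Fin 4) ℂ := fun p => e1 p.1 * e2 p.2 with hbas
  have hP1 : (X 0 * X 1 : MvPolynomial (Fin 4) ℂ) ∈ A' :=
    Algebra.subset_adjoin (by simp)
  have hQ1 : (X 0 ^ n + X 1 ^ n : MvPolynomial (Fin 4) ℂ) ∈ A' :=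
    Algebra.subset_adjoin (by simp)
  have hP2 : (X 2 * X 3 : MvPolynomial (Fin 4) ℂ) ∈ A' :=
    Algebra.subset_adjoin (by simp)
  have hQ2 : (X 2 ^ n + X 3 ^ n : MvPolynomial (Fin 4) ℂ) ∈ A' :=
    Algebra.subset_adjoin (by simp)
  -- Spanning
  have hsetmul : Set.range e1 * Set.range e2 = Set.range bas := by
    ext z
    constructor
    · rintro ⟨x1, ⟨q1, rfl⟩, x2, ⟨q2, rfl⟩, rfl⟩
      exact ⟨(q1, q2), rfl⟩
    · rintro ⟨⟨q1, q2⟩, rfl⟩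
      exact Set.mul_mem_mul ⟨q1, rfl⟩ ⟨q2, rfl⟩
  have hspan : ⊤ ≤ Submodule.span A' (Set.range bas) := by
    intro q _hq
    have hmono : ∀ (d : Fin 4 →₀ ℕ) (cc : ℂ),
        (monomial d cc : MvPolynomial (Fin 4) ℂ) ∈ Submodule.span A' (Set.range bas) := by
      intro d cc
      have e1span := pair_mem_span hn A' (X 0) (X 1) hP1 hQ1 (d 0 + d 1) (d 0) (d 1) le_rfl
      have e2span := pair_mem_span hn A' (X 2) (X 3) hP2 hQ2 (d 2 + d 3) (d 2) (d 3) le_rfl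
      have hprod : (X 0 ^ d 0 * X 1 ^ d 1) * (X 2 ^ d 2 * X 3 ^ d 3) ∈
          Submodule.span A' (Set.range bas) := by
        have := Submodule.mul_mem_mul e1span e2span
        rwa [Submodule.span_mul_span, hsetmul] at this
      have hmeq : (monomial d cc : MvPolynomial (Fin 4) ℂ) =
          cc • ((X 0 ^ d 0 * X 1 ^ d 1) * (X 2 ^ d 2 * X 3 ^ d 3)) := by
        rw [smul_eq_C_mul, monomial_eq, Finsupp.prod_pow, Fin.prod_univ_four]
        ring
      rw [hmeq]
      exact Submodule.smul_of_tower_mem _ cc hprod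
    rw [q.as_sum]
    exact Submodule.sum_mem _ fun d _ => hmono d _
  -- Linear independence
  have hli : LinearIndependent A' bas := by
    rw [Fintype.linearIndependent_iff]
    intro g hrel p0
    set hpol : MvPolynomial (Fin 4) ℂ :=
      X 0 * X 1 * X 2 * X 3 * (X 0 ^ n - X 1 ^ n) * (X 2 ^ n - X 3 ^ n) with hhpol
    have h2n : (2 : ℂ) ^ n ≠ 1 := by
      intro hc
      have h1 : ((2 ^ n : ℕ) : ℂ) = ((1 : ℕ) : ℂ) := by push_cast; simpa using hc
      have h2 : (2 : ℕ) ^ n = 1 := Nat.cast_injective h1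
      have := Nat.one_lt_two_pow (n := n) (by omega)
      omega
    have hne : hpol ≠ 0 := by
      intro h0
      have hc := congrArg (eval ![(1 : ℂ), 2, 1, 2]) h0
      rw [map_zero, hhpol] at hc
      simp only [map_mul, map_sub, map_pow, eval_X] at hc
      have e0 : (![(1 : ℂ), 2, 1, 2]) 0 = 1 := rfl
      have e1' : (![(1 : ℂ), 2, 1, 2]) 1 = 2 := rfl
      have e2' : (![(1 : ℂ), 2, 1, 2]) 2 = 1 := rfl
      have e3' : (![(1 : ℂ), 2, 1, 2]) 3 = 2 := rfl
      rw [e0, e1', e2', e3'] at hc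
      have hsub : (1 : ℂ) ^ n - 2 ^ n ≠ 0 := by
        rw [one_pow, sub_ne_zero]
        exact fun h => h2n h.symm
      exact mul_ne_zero (mul_ne_zero (by norm_num) hsub) hsub hc
    have hev : ∀ x : Fin 4 → ℂ, eval x ((g p0 : MvPolynomial (Fin 4) ℂ) * hpol) = 0 := by
      intro x
      rw [map_mul]
      rcases eq_or_ne (eval x hpol) 0 with h0 | h0
      · rw [h0, mul_zero]
      · suffices hc0 : eval x (g p0 : MvPolynomial (Fin 4) ℂ) = 0 by rw [hc0, zero_mul]
        have hfac : x 0 * x 1 * x 2 * x 3 * (x 0 ^ n - x 1 ^ n) * (x 2 ^ n - x 3 ^ n) ≠ 0 := by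
          simpa only [hhpol, map_mul, map_sub, map_pow, eval_X] using h0
        simp only [mul_ne_zero_iff] at hfac
        obtain ⟨⟨⟨⟨⟨hx0, hx1⟩, hx2⟩, hx3⟩, hd1⟩, hd2⟩ := hfac
        have hn1 : x 0 ^ n ≠ x 1 ^ n := sub_ne_zero.mp hd1
        have hn2 : x 2 ^ n ≠ x 3 ^ n := sub_ne_zero.mp hd2
        obtain ⟨ζ, hζ⟩ : ∃ ζ : ℂ, IsPrimitiveRoot ζ n :=
          ⟨_, Complex.isPrimitiveRoot_exp n (by omega)⟩
        set c : (Fin (n + 1) ⊕ Fin (n - 1)) × (Fin (n + 1) ⊕ Fin (n - 1)) → ℂ :=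
          fun p => eval x ((g p : MvPolynomial (Fin 4) ℂ)) with hcdef
        have hR : ∀ z w : ℂ,
            (∃ j : Fin n, z = ζ ^ (j : ℕ) * x 0 ∨ z = ζ ^ (j : ℕ) * x 1) →
            (∃ k : Fin n, w = ζ ^ (k : ℕ) * x 2 ∨ w = ζ ^ (k : ℕ) * x 3) →
            ∑ p : (Fin (n + 1) ⊕ Fin (n - 1)) × (Fin (n + 1) ⊕ Fin (n - 1)),
              c p * (Sum.elim (fun a : Fin (n + 1) => z ^ (a : ℕ))
                  (fun b : Fin (n - 1) => (x 0 * x 1 / z) ^ ((b : ℕ) + 1)) p.1)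
                * (Sum.elim (fun a : Fin (n + 1) => w ^ (a : ℕ))
                  (fun b : Fin (n - 1) => (x 2 * x 3 / w) ^ ((b : ℕ) + 1)) p.2) = 0 := by
          intro z w hzf hwf
          obtain ⟨hz0, hzP, hzQ⟩ := pair_point hn ζ hζ (x 0) (x 1) z hx0 hx1 hzf
          obtain ⟨hw0, hwP, hwQ⟩ := pair_point hn ζ hζ (x 2) (x 3) w hx2 hx3 hwf
          set y : Fin 4 → ℂ := ![z, x 0 * x 1 / z, w, x 2 * x 3 / w] with hy
          have hy0 : y 0 = z := rfl
          have hy1 : y 1 = x 0 * x 1 / z := rfl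
          have hy2 : y 2 = w := rfl
          have hy3 : y 3 = x 2 * x 3 / w := rfl
          have hinv : ∀ p, eval y ((g p : MvPolynomial (Fin 4) ℂ)) = c p := by
            intro p
            exact inv_eval x y (by rw [hy0, hy1]; exact hzP) (by rw [hy0, hy1]; exact hzQ)
              (by rw [hy2, hy3]; exact hwP) (by rw [hy2, hy3]; exact hwQ) _ (g p).2
          have h0' := congrArg (eval y) hrel
          rw [map_sum, map_zero] at h0'
          rw [← h0']
          refine Finset.sum_congr rfl fun p _ => ?_
          rw [Subalgebra.smul_def, smul_eq_mul, map_mul, hinv p]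
          rcases p with ⟨a | b, a' | b'⟩ <;>
            simp only [hbas, he1, he2, Sum.elim_inl, Sum.elim_inr, map_mul, map_pow, eval_X,
              hy0, hy1, hy2, hy3] <;> ring
        have hd2' : ∀ z : ℂ,
            (∃ j : Fin n, z = ζ ^ (j : ℕ) * x 0 ∨ z = ζ ^ (j : ℕ) * x 1) →
            ∀ q2, ∑ q1, c (q1, q2) * (Sum.elim (fun a : Fin (n + 1) => z ^ (a : ℕ))
              (fun b : Fin (n - 1) => (x 0 * x 1 / z) ^ ((b : ℕ) + 1)) q1) = 0 := by
          intro z hzf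
          apply vd_aux hn ζ (x 2) (x 3) hζ hx2 hx3 hn2
          intro k w hwf
          have hRzw := hR z w hzf ⟨k, hwf⟩
          rw [Fintype.sum_prod_type_right] at hRzw
          rw [← hRzw]
          refine Finset.sum_congr rfl fun q2 _ => ?_
          rw [Finset.sum_mul]
        have hfin : ∀ q1 q2, c (q1, q2) = 0 := by
          intro q1 q2
          refine vd_aux hn ζ (x 0) (x 1) hζ hx0 hx1 hn1 (fun q1' => c (q1', q2)) ?_ q1
          intro j z hzf
          exact hd2' z ⟨j, hzf⟩ q2
        exact hfin p0.1 p0.2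
    have hg0 : (g p0 : MvPolynomial (Fin 4) ℂ) * hpol = 0 := by
      apply MvPolynomial.funext
      intro x
      rw [map_zero]
      exact hev x
    rcases mul_eq_zero.mp hg0 with h | h
    · exact Subtype.ext (by simpa using h)
    · exact absurd h hne
  exact ⟨Module.Basis.mk hli hspan, fun p => Module.Basis.mk_apply hli hspan p⟩
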